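/- arXiv:1702.06998 — 3 statements merged into one kernel-verified Lean document; each statement's English description precedes it below -/
import Mathlib

section
/- For every real number p with 1 < p < 2 there exists a constant C > 0 such that for all vectors ξ, η in ℝ^N, not both zero: |η - ξ|^2 · (|η| + |ξ|)^{p-2} ≤ C · ⟨|η|^{p-2} η - |ξ|^{p-2} ξ, η - ξ⟩. -/
open Real NNReal

private lemma bern_aux {q u : ℝ} (hq0 : 0 ≤ q) (hq1 : q ≤ 1) (hu : 0 ≤ u) :
    u ^ q ≤ q * u + (1 - q) := by
  have h := Real.geom_mean_le_arith_mean2_weighted hq0 (by linarith : (0:ℝ) ≤ 1 - q) hu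
    zero_le_one (by ring)
  simpa using h

private lemma subadd_aux {q : ℝ} (hq0 : 0 ≤ q) (hq1 : q ≤ 1) {s t : ℝ} (hs : 0 ≤ s)
    (ht : 0 ≤ t) : (s + t) ^ q ≤ s ^ q + t ^ q := by
  have h := NNReal.rpow_add_le_add_rpow (Real.toNNReal s) (Real.toNNReal t) hq0 hq1
  have h' : (((Real.toNNReal s + Real.toNNReal t) ^ q : ℝ≥0) : ℝ) ≤
      (((Real.toNNReal s) ^ q + (Real.toNNReal t) ^ q : ℝ≥0) : ℝ) := by exact_mod_cast h
  rw [NNReal.coe_rpow, NNReal.coe_add, NNReal.coe_add, NNReal.coe_rpow, NNReal.coe_rpow,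
    Real.coe_toNNReal s hs, Real.coe_toNNReal t ht] at h'
  exact h'

private lemma rpow_sub_one_mul {x a : ℝ} (hx : 0 ≤ x) (ha : a ≠ 0) (ha1 : a - 1 ≠ 0) :
    x ^ (a - 1) * x = x ^ a := by
  rcases hx.eq_or_lt with h | h
  · rw [← h, Real.zero_rpow ha1, Real.zero_rpow ha, zero_mul]
  · have ha' : a - 1 + 1 = a := by ring
    rw [← Real.rpow_add_one h.ne' (a - 1), ha']

private lemma scalar_aux (p : ℝ) (hp1 : 1 < p) (hp2 : p < 2) {s t : ℝ} (hs : 0 ≤ s)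
    (hst : s ≤ t) (ht : 0 < t) :
    (p - 1) * ((t - s) * (s + t) ^ (p - 2)) ≤ t ^ (p - 1) - s ^ (p - 1) := by
  have hq0 : (0:ℝ) < p - 1 := by linarith
  have h1 : (s + t) ^ (p - 2) ≤ t ^ (p - 2) :=
    Real.rpow_le_rpow_of_nonpos ht (by linarith) (by linarith)
  have h2 : (p - 1) * ((t - s) * (s + t) ^ (p - 2)) ≤ (p - 1) * ((t - s) * t ^ (p - 2)) := by
    apply mul_le_mul_of_nonneg_left (mul_le_mul_of_nonneg_left h1 (by linarith)) (by linarith)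
  have hb : (s / t) ^ (p - 1) ≤ (p - 1) * (s / t) + (2 - p) := by
    have := bern_aux (q := p - 1) (u := s / t) (by linarith) (by linarith)
      (div_nonneg hs ht.le)
    linarith [this]
  have hsp : s ^ (p - 1) = (s / t) ^ (p - 1) * t ^ (p - 1) := by
    rw [← Real.mul_rpow (div_nonneg hs ht.le) ht.le, div_mul_cancel₀ _ ht.ne']
  have htp : 0 < t ^ (p - 1) := Real.rpow_pos_of_pos ht _
  have ht1 : t ^ (p - 2) * t = t ^ (p - 1) := by
    have := rpow_sub_one_mul (x := t) (a := p - 1) ht.le (by linarith) (by linarith)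
    simpa [show p - 1 - 1 = p - 2 by ring] using this
  have hdiv : (s / t) * t ^ (p - 1) = s * t ^ (p - 2) := by
    rw [← ht1]; field_simp
  have hb2 : s ^ (p - 1) ≤ (p - 1) * (s * t ^ (p - 2)) + (2 - p) * t ^ (p - 1) := by
    rw [hsp]
    calc (s / t) ^ (p - 1) * t ^ (p - 1)
        ≤ ((p - 1) * (s / t) + (2 - p)) * t ^ (p - 1) :=
          mul_le_mul_of_nonneg_right hb htp.le
      _ = (p - 1) * ((s / t) * t ^ (p - 1)) + (2 - p) * t ^ (p - 1) := by ring
      _ = (p - 1) * (s * t ^ (p - 2)) + (2 - p) * t ^ (p - 1) := by rw [hdiv]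
  nlinarith [h2, hb2, ht1]

private lemma key_aux' (p C : ℝ) (hp1 : 1 < p) (hp2 : p < 2) (hC : C = 1 / (p - 1))
    {s t I : ℝ} (hs : 0 ≤ s) (hst : s ≤ t) (ht : 0 < t)
    (hI1 : -(s * t) ≤ I) (hI2 : I ≤ s * t) :
    (t ^ (2:ℕ) + s ^ (2:ℕ) - 2 * I) * (s + t) ^ (p - 2) ≤
      C * (t ^ p + s ^ p - (t ^ (p - 2) + s ^ (p - 2)) * I) := by
  have hq0 : (0:ℝ) < p - 1 := by linarith
  have hCpos : 0 < C := by rw [hC]; positivity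
  have hC1 : 1 ≤ C := by
    rw [hC, le_div_iff₀ hq0]; linarith
  have hCp : C * (p - 1) = 1 := by rw [hC]; field_simp
  have hstpos : 0 < s + t := by linarith
  set X := (s + t) ^ (p - 2) with hXdef
  have hX0 : 0 < X := Real.rpow_pos_of_pos hstpos _
  -- power identities
  have ht1 : t ^ (p - 2) * t = t ^ (p - 1) := by
    have := rpow_sub_one_mul (x := t) (a := p - 1) ht.le (by linarith) (by linarith)
    simpa [show p - 1 - 1 = p - 2 by ring] using this
  have ht2 : t ^ (p - 1) * t = t ^ p := by
    exact rpow_sub_one_mul ht.le (by linarith) (by linarith)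
  have hs1 : s ^ (p - 2) * s = s ^ (p - 1) := by
    have := rpow_sub_one_mul (x := s) (a := p - 1) hs (by linarith) (by linarith)
    simpa [show p - 1 - 1 = p - 2 by ring] using this
  have hs2 : s ^ (p - 1) * s = s ^ p := by
    exact rpow_sub_one_mul hs (by linarith) (by linarith)
  have hX1 : X * (s + t) = (s + t) ^ (p - 1) := by
    have := rpow_sub_one_mul (x := s + t) (a := p - 1) hstpos.le (by linarith) (by linarith)
    simpa [hXdef, show p - 1 - 1 = p - 2 by ring] using this
  -- endpoint at I = -s*t
  have hsub : (s + t) ^ (p - 1) ≤ s ^ (p - 1) + t ^ (p - 1) :=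
    subadd_aux (by linarith) (by linarith) hs ht.le
  have hrp_nonneg : 0 ≤ s ^ (p - 1) + t ^ (p - 1) := by positivity
  have e1 : 0 ≤ C * (t ^ p + s ^ p + (t ^ (p - 2) + s ^ (p - 2)) * (s * t))
      - (t ^ (2:ℕ) + s ^ (2:ℕ) + 2 * (s * t)) * X := by
    have heq : t ^ p + s ^ p + (t ^ (p - 2) + s ^ (p - 2)) * (s * t)
        = (s ^ (p - 1) + t ^ (p - 1)) * (s + t) := by
      rw [← ht2, ← hs2, ← ht1, ← hs1]; ring
    have heq2 : (t ^ (2:ℕ) + s ^ (2:ℕ) + 2 * (s * t)) * X = (s + t) ^ (p - 1) * (s + t) := by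
      rw [← hX1]; ring
    rw [heq, heq2]
    have step1 : (s + t) ^ (p - 1) * (s + t) ≤ (s ^ (p - 1) + t ^ (p - 1)) * (s + t) :=
      mul_le_mul_of_nonneg_right hsub hstpos.le
    have step2 : (s ^ (p - 1) + t ^ (p - 1)) * (s + t)
        ≤ C * ((s ^ (p - 1) + t ^ (p - 1)) * (s + t)) := by
      nlinarith [mul_nonneg hrp_nonneg hstpos.le]
    linarith
  -- endpoint at I = s*t
  have hsc := scalar_aux p hp1 hp2 hs hst ht
  have e2 : 0 ≤ C * (t ^ p + s ^ p - (t ^ (p - 2) + s ^ (p - 2)) * (s * t))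
      - (t ^ (2:ℕ) + s ^ (2:ℕ) - 2 * (s * t)) * X := by
    have heq : t ^ p + s ^ p - (t ^ (p - 2) + s ^ (p - 2)) * (s * t)
        = (t ^ (p - 1) - s ^ (p - 1)) * (t - s) := by
      rw [← ht2, ← hs2, ← ht1, ← hs1]; ring
    have heq2 : (t ^ (2:ℕ) + s ^ (2:ℕ) - 2 * (s * t)) * X = ((t - s) * X) * (t - s) := by
      ring
    rw [heq, heq2]
    have h3 : (t - s) * X ≤ C * (t ^ (p - 1) - s ^ (p - 1)) := by
      have h4 := mul_le_mul_of_nonneg_left hsc hCpos.le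
      calc (t - s) * X = C * ((p - 1) * ((t - s) * (s + t) ^ (p - 2))) := by
            rw [hXdef]
            linear_combination (-((t - s) * (s + t) ^ (p - 2))) * hCp
        _ ≤ C * (t ^ (p - 1) - s ^ (p - 1)) := h4
    have := mul_le_mul_of_nonneg_right h3 (by linarith : (0:ℝ) ≤ t - s)
    linarith
  -- affine interpolation in I
  rcases le_or_gt 0 (2 * X - C * (t ^ (p - 2) + s ^ (p - 2))) with hB | hB
  · have hprod : 0 ≤ (2 * X - C * (t ^ (p - 2) + s ^ (p - 2))) * (I + s * t) :=
      mul_nonneg hB (by linarith)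
    linarith [e1, hprod]
  · have hprod : 0 ≤ (C * (t ^ (p - 2) + s ^ (p - 2)) - 2 * X) * (s * t - I) :=
      mul_nonneg (by linarith) (by linarith)
    linarith [e2, hprod]

private lemma key_aux (p C : ℝ) (hp1 : 1 < p) (hp2 : p < 2) (hC : C = 1 / (p - 1))
    {s t I : ℝ} (hs : 0 ≤ s) (ht : 0 ≤ t) (hpos : 0 < s + t) (hI : |I| ≤ s * t) :
    (t ^ (2:ℕ) + s ^ (2:ℕ) - 2 * I) * (s + t) ^ (p - 2) ≤
      C * (t ^ p + s ^ p - (t ^ (p - 2) + s ^ (p - 2)) * I) := by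
  rw [abs_le] at hI
  rcases le_total s t with h | h
  · exact key_aux' p C hp1 hp2 hC hs h (by linarith) hI.1 hI.2
  · have := key_aux' p C hp1 hp2 hC (s := t) (t := s) (I := I) ht h (by linarith)
      (by linarith [hI.1]) (by linarith [hI.2])
    rw [add_comm t s] at this
    linarith

theorem pLaplacian_monotonicity_singular (N : ℕ) (p : ℝ) (hp1 : 1 < p) (hp2 : p < 2) :
    ∃ C : ℝ, 0 < C ∧ ∀ ξ η : EuclideanSpace ℝ (Fin N), ¬(ξ = 0 ∧ η = 0) →
      ‖η - ξ‖ ^ (2 : ℕ) * (‖η‖ + ‖ξ‖) ^ (p - 2) ≤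
        C * (inner ℝ (‖η‖ ^ (p - 2) • η - ‖ξ‖ ^ (p - 2) • ξ) (η - ξ) : ℝ) := by
  have hq0 : (0:ℝ) < p - 1 := by linarith
  refine ⟨1 / (p - 1), by positivity, fun ξ η hne => ?_⟩
  set s := ‖ξ‖ with hsdef
  set t := ‖η‖ with htdef
  have hs : 0 ≤ s := norm_nonneg _
  have ht : 0 ≤ t := norm_nonneg _
  have hpos : 0 < s + t := by
    rcases not_and_or.mp hne with h | h
    · have : 0 < s := norm_pos_iff.mpr h
      linarith
    · have : 0 < t := norm_pos_iff.mpr h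
      linarith
  set I : ℝ := inner ℝ ξ η with hIdef
  have hCS : |I| ≤ s * t := by
    simpa [hIdef, hsdef, htdef] using abs_real_inner_le_norm ξ η
  -- identities converting rpow*pow to rpow
  have ht1 : t ^ (p - 2) * t = t ^ (p - 1) := by
    have := rpow_sub_one_mul (x := t) (a := p - 1) ht (by linarith) (by linarith)
    simpa [show p - 1 - 1 = p - 2 by ring] using this
  have ht2 : t ^ (p - 1) * t = t ^ p := rpow_sub_one_mul ht (by linarith) (by linarith)
  have hs1 : s ^ (p - 2) * s = s ^ (p - 1) := by
    have := rpow_sub_one_mul (x := s) (a := p - 1) hs (by linarith) (by linarith)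
    simpa [show p - 1 - 1 = p - 2 by ring] using this
  have hs2 : s ^ (p - 1) * s = s ^ p := rpow_sub_one_mul hs (by linarith) (by linarith)
  -- expand the inner product
  have hinner : (inner ℝ (t ^ (p - 2) • η - s ^ (p - 2) • ξ) (η - ξ) : ℝ) =
      t ^ p + s ^ p - (t ^ (p - 2) + s ^ (p - 2)) * I := by
    have hηη : (inner ℝ η η : ℝ) = t * t := real_inner_self_eq_norm_mul_norm η
    have hξξ : (inner ℝ ξ ξ : ℝ) = s * s := real_inner_self_eq_norm_mul_norm ξ
    have hηξ : (inner ℝ η ξ : ℝ) = I := by rw [hIdef]; exact real_inner_comm ξ η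
    rw [inner_sub_left, inner_sub_right, inner_sub_right, real_inner_smul_left,
      real_inner_smul_left, real_inner_smul_left, real_inner_smul_left,
      hηη, hξξ, hηξ, ← hIdef, ← ht2, ← hs2, ← ht1, ← hs1]
    ring
  have hnorm : ‖η - ξ‖ ^ (2:ℕ) = t ^ (2:ℕ) + s ^ (2:ℕ) - 2 * I := by
    have h := @norm_sub_sq_real (EuclideanSpace ℝ (Fin N)) _ _ η ξ
    have hηξ : (inner ℝ η ξ : ℝ) = I := by rw [hIdef]; exact real_inner_comm ξ η
    rw [hηξ] at h
    rw [h]; ring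
  rw [hinner, hnorm, show t + s = s + t from add_comm t s]
  exact key_aux p _ hp1 hp2 rfl hs ht hpos hCS
end

section
/- Let u be a nonnegative continuous function on an open set Ω ⊆ ℝ^N that is locally Lipschitz, and suppose there are constants c̃ > 0, L > 0, r̃₀ > 0 such that for every ball B_r(x) ⊆ Ω with x ∈ ∂{u>0} and 0 < r ≤ r̃₀, the average (1/|B_r(x)|) ∫_{B_r(x)} u ≥ c̃ r, and |∇u| ≤ L a.e. on Ω. Then for every such ball, |B_r(x) ∩ {u>0}| / |B_r(x)| ≥ c̃ / L. -/
open MeasureTheory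

theorem positivity_set_density_lower_bound (N : ℕ)
    (Ω : Set (EuclideanSpace ℝ (Fin N))) (hΩ : IsOpen Ω)
    (u : EuclideanSpace ℝ (Fin N) → ℝ)
    (hcont : ContinuousOn u Ω) (hnn : ∀ x ∈ Ω, 0 ≤ u x)
    (ctil L rtil : ℝ) (hc : 0 < ctil) (hL : 0 < L) (hr : 0 < rtil)
    (hlip : LipschitzOnWith (Real.toNNReal L) u Ω)
    (havg : ∀ x r, x ∈ frontier {y | 0 < u y} → 0 < r → r ≤ rtil →
      Metric.ball x r ⊆ Ω →
      ctil * r ≤ (1 / (volume (Metric.ball x r)).toReal) * ∫ y in Metric.ball x r, u y) :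
    ∀ x r, x ∈ frontier {y | 0 < u y} → 0 < r → r ≤ rtil → Metric.ball x r ⊆ Ω →
      ENNReal.ofReal (ctil / L) * volume (Metric.ball x r) ≤
        volume (Metric.ball x r ∩ {y | 0 < u y}) := by
  intro x r hxf hr0 hrr hball
  set B := Metric.ball x r with hB
  have hxB : x ∈ B := Metric.mem_ball_self hr0
  have hxΩ : x ∈ Ω := hball hxB
  -- S ∩ Ω is open
  have hSopen : IsOpen (Ω ∩ u ⁻¹' Set.Ioi 0) :=
    hcont.isOpen_inter_preimage hΩ isOpen_Ioi
  -- u x = 0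
  have hux : u x = 0 := by
    by_contra h
    have hpos : 0 < u x := lt_of_le_of_ne (hnn x hxΩ) (Ne.symm h)
    have : x ∈ interior {y | 0 < u y} := by
      apply interior_mono (s := Ω ∩ u ⁻¹' Set.Ioi 0)
      · intro y hy; exact hy.2
      · rw [hSopen.interior_eq]; exact ⟨hxΩ, hpos⟩
    exact hxf.2 this
  -- pointwise bound : for y ∈ B, u y ≤ L * r and u y ≤ indicator
  have hbound : ∀ y ∈ B, u y ≤ (B ∩ {y | 0 < u y}).indicator (fun _ => L * r) y := by
    intro y hyB
    have hyΩ : y ∈ Ω := hball hyB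
    rcases lt_or_eq_of_le (hnn y hyΩ) with hy | hy
    · have := hlip.dist_le_mul y hyΩ x hxΩ
      rw [Real.dist_eq, hux, sub_zero, Real.coe_toNNReal _ hL.le] at this
      have hdy : dist y x < r := Metric.mem_ball.mp hyB
      have hle : u y ≤ L * r := by
        calc u y ≤ |u y| := le_abs_self _
        _ ≤ L * dist y x := this
        _ ≤ L * r := by nlinarith [dist_nonneg (x := y) (y := x)]
      rw [Set.indicator_of_mem (Set.mem_inter hyB hy)]; exact hle
    · rw [← hy]; exact Set.indicator_nonneg (fun _ _ => by positivity) y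
  have hmeasB : MeasurableSet B := measurableSet_ball
  have hVfin : volume B ≠ ⊤ := (measure_ball_lt_top).ne
  have hmeasBS : MeasurableSet (B ∩ {y | 0 < u y}) := by
    have : B ∩ {y | 0 < u y} = B ∩ (Ω ∩ u ⁻¹' Set.Ioi 0) := by
      ext y; constructor
      · rintro ⟨h1, h2⟩; exact ⟨h1, hball h1, h2⟩
      · rintro ⟨h1, _, h3⟩; exact ⟨h1, h3⟩
    rw [this]; exact hmeasB.inter hSopen.measurableSet
  -- integrability
  have hInt2 : IntegrableOn ((B ∩ {y | 0 < u y}).indicator (fun _ => L * r)) B := by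
    have hc' : IntegrableOn (fun _ : EuclideanSpace ℝ (Fin N) => L * r) B volume :=
      (integrableOn_const_iff (C := L * r)).mpr (Or.inr (lt_top_iff_ne_top.mpr hVfin))
    exact hc'.indicator hmeasBS
  have haesm : AEStronglyMeasurable u (volume.restrict B) :=
    (hcont.mono hball).aestronglyMeasurable hmeasB
  have hInt1 : IntegrableOn u B := by
    refine ⟨haesm, ?_⟩
    apply HasFiniteIntegral.mono' hInt2.2
    filter_upwards [ae_restrict_mem hmeasB] with y hy
    rw [Real.norm_eq_abs, abs_of_nonneg (hnn y (hball hy))]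
    exact hbound y hy
  -- integral bound
  set m := (volume (B ∩ {y | 0 < u y})).toReal with hm
  have hint : ∫ y in B, u y ≤ L * r * m := by
    have h1 : ∫ y in B, u y ≤ ∫ y in B, (B ∩ {y | 0 < u y}).indicator (fun _ => L * r) y :=
      setIntegral_mono_on hInt1 hInt2 hmeasB hbound
    have h2 : ∫ y in B, (B ∩ {y | 0 < u y}).indicator (fun _ => L * r) y = L * r * m := by
      rw [setIntegral_indicator hmeasBS]
      have : B ∩ (B ∩ {y | 0 < u y}) = B ∩ {y | 0 < u y} := by
        rw [← Set.inter_assoc, Set.inter_self]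
      rw [this, setIntegral_const, smul_eq_mul, mul_comm]; rfl
    linarith
  have hV : 0 < (volume B).toReal := by
    apply ENNReal.toReal_pos _ hVfin
    simpa [hB] using (Metric.measure_ball_pos volume x hr0).ne'
  have h3 := havg x r hxf hr0 hrr hball
  have hmain : ctil / L * (volume B).toReal ≤ m := by
    have h4 : ctil * r * (volume B).toReal ≤ ∫ y in B, u y := by
      rw [one_div] at h3
      calc ctil * r * (volume B).toReal
          ≤ ((volume B).toReal⁻¹ * ∫ y in B, u y) * (volume B).toReal := by
            apply mul_le_mul_of_nonneg_right h3 hV.le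
        _ = ∫ y in B, u y := by field_simp
    have : ctil * r * (volume B).toReal ≤ L * r * m := le_trans h4 hint
    rw [div_mul_eq_mul_div, div_le_iff₀ hL]
    nlinarith
  calc ENNReal.ofReal (ctil / L) * volume B
      = ENNReal.ofReal (ctil / L) * ENNReal.ofReal (volume B).toReal := by
        rw [ENNReal.ofReal_toReal hVfin]
    _ = ENNReal.ofReal (ctil / L * (volume B).toReal) := by
        rw [ENNReal.ofReal_mul (by positivity)]
    _ ≤ ENNReal.ofReal m := ENNReal.ofReal_le_ofReal hmain
    _ ≤ volume (B ∩ {y | 0 < u y}) := ENNReal.ofReal_toReal_le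
end

section
/- Let u be continuous and nonnegative on an open set Ω ⊆ ℝ^N, L-Lipschitz on a ball B_{2R}(x₀) ⊆ Ω, and nondegenerate in the sense that for every y ∈ ∂{u>0} ∩ B_R(x₀) and ρ ≤ ρ₀, sup_{B_ρ(y)} u ≥ c_min ρ. Suppose x₀ ∈ ∂{u>0} and the exterior unit normal in measure-theoretic sense at x₀ is e_N, i.e. (1/r^N)∫_{B_r(x₀)} |χ_{{u>0}} − χ_{{x_N < x₀·e_N}}| dx → 0 as r → 0. Then for every 0 < σ < σ₀ (σ₀ depending on N, c_min, L) there is r_σ > 0 such that for all r ≤ r_σ: u(x) = 0 for every x ∈ B_r(x₀) with ⟨x − x₀, e_N⟩ ≥ σ r. -/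
open MeasureTheory Metric Set

/-- Auxiliary: on a convex set where a nonnegative continuous function is positive at `a`
and zero at `b`, the segment from `a` to `b` meets the frontier of the positivity set. -/
lemma aux_frontier_on_segment {E : Type*} [NormedAddCommGroup E] [NormedSpace ℝ E]
    {u : E → ℝ} {s : Set E} (hconv : Convex ℝ s) (hcont : ContinuousOn u s)
    (hnn : ∀ x ∈ s, 0 ≤ u x) {a b : E} (ha : a ∈ s) (hb : b ∈ s)
    (hua : 0 < u a) (hub : u b = 0) :
    ∃ y ∈ segment ℝ a b, y ∈ frontier {z | 0 < u z} := by
  set γ : ℝ → E := fun t => (1 - t) • a + t • b with hγdef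
  have hγc : Continuous γ := by continuity
  have hseg : ∀ t ∈ Icc (0:ℝ) 1, γ t ∈ segment ℝ a b := by
    intro t ht
    exact ⟨1 - t, t, by linarith [ht.2], ht.1, by ring, rfl⟩
  have hγs : ∀ t ∈ Icc (0:ℝ) 1, γ t ∈ s := fun t ht =>
    hconv.segment_subset ha hb (hseg t ht)
  set T : Set ℝ := Icc 0 1 ∩ γ ⁻¹' (u ⁻¹' Iic 0) with hTdef
  have hT1 : (1:ℝ) ∈ T := by
    refine ⟨⟨zero_le_one, le_refl 1⟩, ?_⟩
    simp [hγdef, hub]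
  have hTc : IsClosed T := by
    have h1 : ContinuousOn (u ∘ γ) (Icc 0 1) :=
      hcont.comp hγc.continuousOn (fun t ht => hγs t ht)
    have h2 : IsClosed (Icc (0:ℝ) 1 ∩ (u ∘ γ) ⁻¹' Iic 0) :=
      h1.preimage_isClosed_of_isClosed isClosed_Icc isClosed_Iic
    simpa [Set.preimage_comp] using h2
  have hTne : T.Nonempty := ⟨1, hT1⟩
  have hTbdd : BddBelow T := ⟨0, fun t ht => ht.1.1⟩
  set t₀ := sInf T with ht₀def
  have ht₀T : t₀ ∈ T := hTc.csInf_mem hTne hTbdd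
  have ht₀I : t₀ ∈ Icc (0:ℝ) 1 := ht₀T.1
  have hu0 : u (γ t₀) = 0 := le_antisymm ht₀T.2 (hnn _ (hγs _ ht₀I))
  have ht₀pos : 0 < t₀ := by
    rcases eq_or_lt_of_le ht₀I.1 with h | h
    · exfalso
      have hγ0 : γ t₀ = a := by simp [hγdef, ← h]
      rw [hγ0] at hu0; linarith
    · exact h
  have hlt : ∀ t ∈ Ico (0:ℝ) t₀, γ t ∈ {z | 0 < u z} := by
    intro t ht
    have htT : t ∉ T := fun hmem => absurd (csInf_le hTbdd hmem) (not_le.mpr ht.2)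
    have htI : t ∈ Icc (0:ℝ) 1 := ⟨ht.1, le_trans ht.2.le ht₀I.2⟩
    by_contra hc
    exact htT ⟨htI, by simpa using (not_lt.mp hc)⟩
  have hclos : γ t₀ ∈ closure {z | 0 < u z} := by
    have h1 : t₀ ∈ closure (Ico (0:ℝ) t₀) := by
      rw [closure_Ico (ne_of_lt ht₀pos)]
      exact ⟨ht₀pos.le, le_refl _⟩
    have h3 : γ t₀ ∈ closure (γ '' Ico 0 t₀) :=
      image_closure_subset_closure_image hγc ⟨t₀, h1, rfl⟩
    refine closure_mono ?_ h3
    rintro _ ⟨t, ht, rfl⟩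
    exact hlt t ht
  refine ⟨γ t₀, hseg _ ht₀I, ?_⟩
  rw [frontier_eq_closure_inter_closure]
  refine ⟨hclos, subset_closure ?_⟩
  simp [hu0]

theorem flatness_at_measure_theoretic_normal_points (n : ℕ)
    (Ω : Set (EuclideanSpace ℝ (Fin (n + 1)))) (hΩ : IsOpen Ω)
    (u : EuclideanSpace ℝ (Fin (n + 1)) → ℝ)
    (hcont : ContinuousOn u Ω) (hnn : ∀ x ∈ Ω, 0 ≤ u x)
    (L cmin R ρ₀ : ℝ) (hL : 0 < L) (hcmin : 0 < cmin) (hR : 0 < R) (hρ₀ : 0 < ρ₀)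
    (x₀ : EuclideanSpace ℝ (Fin (n + 1)))
    (hball : Metric.ball x₀ (2 * R) ⊆ Ω)
    (hlip : LipschitzOnWith (Real.toNNReal L) u (Metric.ball x₀ (2 * R)))
    (hnondeg : ∀ y ∈ frontier {z | 0 < u z} ∩ Metric.ball x₀ R, ∀ ρ : ℝ,
      0 < ρ → ρ ≤ ρ₀ → cmin * ρ ≤ sSup (u '' Metric.ball y ρ))
    (hx₀ : x₀ ∈ frontier {z | 0 < u z})
    (eN : EuclideanSpace ℝ (Fin (n + 1)))
    (heN : eN = EuclideanSpace.single (Fin.last n) 1)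
    (hnormal : Filter.Tendsto
      (fun r : ℝ => (1 / r ^ (n + 1)) *
        ∫ x in Metric.ball x₀ r,
          |(if 0 < u x then (1 : ℝ) else 0) -
            (if (inner ℝ (x - x₀) eN : ℝ) < 0 then (1 : ℝ) else 0)|)
      (nhdsWithin 0 (Set.Ioi 0)) (nhds 0)) :
    ∃ σ₀ : ℝ, 0 < σ₀ ∧ ∀ σ : ℝ, 0 < σ → σ < σ₀ →
      ∃ rσ : ℝ, 0 < rσ ∧ ∀ r : ℝ, 0 < r → r ≤ rσ →
        ∀ x ∈ Metric.ball x₀ r, σ * r ≤ (inner ℝ (x - x₀) eN : ℝ) → u x = 0 := by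
  classical
  have heN1 : ‖eN‖ = 1 := by
    rw [heN, EuclideanSpace.norm_single]
    norm_num
  have hinner_le : ∀ a b : EuclideanSpace ℝ (Fin (n+1)),
      |(inner ℝ (a - b) eN : ℝ)| ≤ dist a b := by
    intro a b
    calc |(inner ℝ (a - b) eN : ℝ)| ≤ ‖a - b‖ * ‖eN‖ := abs_real_inner_le_norm _ _
    _ = dist a b := by rw [heN1, mul_one, dist_eq_norm]
  have hinner_split : ∀ a b : EuclideanSpace ℝ (Fin (n+1)),
      (inner ℝ (a - x₀) eN : ℝ) = (inner ℝ (a - b) eN : ℝ) + (inner ℝ (b - x₀) eN : ℝ) := by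
    intro a b
    simp only [inner_sub_left]
    ring
  -- constants
  set κ : ℝ := min (cmin / (2 * L)) 1 / 8 with hκdef
  have hκpos : 0 < κ := by
    apply div_pos _ (by norm_num)
    exact lt_min (div_pos hcmin (by linarith)) one_pos
  have hκ8 : κ ≤ 1/8 := by
    have h := min_le_right (cmin / (2 * L)) 1
    rw [hκdef]; linarith
  have hκL : L * κ ≤ cmin / 16 := by
    have h1 : min (cmin / (2*L)) 1 ≤ cmin / (2*L) := min_le_left _ _
    have h2 : L * min (cmin / (2*L)) 1 ≤ L * (cmin / (2*L)) :=
      mul_le_mul_of_nonneg_left h1 hL.le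
    have h3 : L * (cmin / (2*L)) = cmin / 2 := by field_simp
    rw [hκdef]
    rw [h3] at h2
    linarith
  set c0 : ℝ := (volume (Metric.ball (0 : EuclideanSpace ℝ (Fin (n+1))) 1)).toReal with hc0def
  have hc0pos : 0 < c0 := by
    rw [hc0def]
    exact ENNReal.toReal_pos (ne_of_gt (measure_ball_pos _ _ one_pos)) measure_ball_lt_top.ne
  refine ⟨1, one_pos, ?_⟩
  intro σ hσ hσ1
  have hεpos : 0 < (κ * σ / 2) ^ (n+1) * c0 :=
    mul_pos (pow_pos (by positivity) _) hc0pos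
  obtain ⟨δ, hδpos, hδ⟩ := Metric.tendsto_nhdsWithin_nhds.mp hnormal _ hεpos
  refine ⟨min (δ/4) (min (R/2) ρ₀), by positivity, ?_⟩
  intro r hr hrle x hx hxσ
  have hrδ : r ≤ δ/4 := le_trans hrle (min_le_left _ _)
  have hrR : r ≤ R/2 := le_trans hrle (le_trans (min_le_right _ _) (min_le_left _ _))
  have hrρ : r ≤ ρ₀ := le_trans hrle (le_trans (min_le_right _ _) (min_le_right _ _))
  by_contra hne
  rw [Metric.mem_ball] at hx
  have hσr : 0 < σ * r := mul_pos hσ hr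
  have hσrr : σ * r < r := by nlinarith
  have hxΩ : x ∈ Ω := by
    apply hball
    rw [Metric.mem_ball]
    linarith
  have hux : 0 < u x := lt_of_le_of_ne (hnn x hxΩ) (Ne.symm hne)
  set δ' : ℝ := κ * σ * r with hδ'def
  have hδ'pos : 0 < δ' := by positivity
  have hδ'small : δ' ≤ σ * r / 8 := by
    have h := mul_le_mul_of_nonneg_right hκ8 hσr.le
    rw [hδ'def]
    linarith
  have h2r2R : Metric.ball x₀ (2*r) ⊆ Metric.ball x₀ (2*R) :=
    Metric.ball_subset_ball (by linarith)
  -- key geometric step: a ball of radius δ' inside {u > 0} on the positive side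
  have key : ∃ w : EuclideanSpace ℝ (Fin (n+1)),
      Metric.ball w δ' ⊆ Metric.ball x₀ (2*r) ∧
      ∀ q ∈ Metric.ball w δ', 0 < u q ∧ 0 < (inner ℝ (q - x₀) eN : ℝ) := by
    by_cases hcase : ∀ p ∈ Metric.ball x (σ * r / 2), 0 < u p
    · refine ⟨x, ?_, ?_⟩
      · intro q hq
        rw [Metric.mem_ball] at hq ⊢
        have ht := dist_triangle q x x₀
        linarith [hδ'small]
      · intro q hq
        rw [Metric.mem_ball] at hq
        constructor
        · exact hcase q (by rw [Metric.mem_ball]; linarith)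
        · have h1 := abs_le.mp (hinner_le q x)
          have h2 := hinner_split q x
          linarith [h1.1]
    · push_neg at hcase
      obtain ⟨p, hp, hup⟩ := hcase
      have hballΩ : Metric.ball x (σ * r / 2) ⊆ Ω := by
        intro q hq
        apply hball
        rw [Metric.mem_ball] at hq ⊢
        have ht := dist_triangle q x x₀
        linarith
      obtain ⟨y, hyseg, hyfr⟩ := aux_frontier_on_segment (convex_ball x (σ*r/2))
        (hcont.mono hballΩ) (fun z hz => hnn z (hballΩ hz))
        (Metric.mem_ball_self (by positivity)) hp hux
        (le_antisymm hup (hnn p (hballΩ hp)))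
      have hyball : y ∈ Metric.ball x (σ * r / 2) :=
        (convex_ball x _).segment_subset (Metric.mem_ball_self (by positivity)) hp hyseg
      rw [Metric.mem_ball] at hyball
      have hyR : y ∈ Metric.ball x₀ R := by
        rw [Metric.mem_ball]
        have ht := dist_triangle y x x₀
        linarith
      have hyinner : σ * r / 2 ≤ (inner ℝ (y - x₀) eN : ℝ) := by
        have h1 := abs_le.mp (hinner_le y x)
        have h2 := hinner_split y x
        linarith [h1.1]
      have hρpos : 0 < σ * r / 8 := by positivity
      have hρle : σ * r / 8 ≤ ρ₀ := by linarith
      have hnd := hnondeg y ⟨hyfr, hyR⟩ (σ * r / 8) hρpos hρle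
      have hne2 : (u '' Metric.ball y (σ * r / 8)).Nonempty :=
        ⟨u y, y, Metric.mem_ball_self hρpos, rfl⟩
      obtain ⟨v, hv, hvlt⟩ := exists_lt_of_lt_csSup hne2
        (lt_of_lt_of_le (by
          have := mul_pos hcmin hρpos
          linarith : cmin * (σ * r / 8) / 2 < cmin * (σ * r / 8)) hnd)
      obtain ⟨z, hz, rfl⟩ := hv
      rw [Metric.mem_ball] at hz
      have hzsub : Metric.ball z δ' ⊆ Metric.ball x₀ (2*r) := by
        intro q hq
        rw [Metric.mem_ball] at hq ⊢
        have t1 := dist_triangle q z y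
        have t2 := dist_triangle q y x
        have t3 := dist_triangle q x x₀
        have t4 := dist_triangle z y x
        linarith [hδ'small]
      refine ⟨z, hzsub, ?_⟩
      intro q hq
      have hq2r : q ∈ Metric.ball x₀ (2*r) := hzsub hq
      rw [Metric.mem_ball] at hq
      constructor
      · -- u q > 0 via Lipschitz estimate from z
        have hz2R : z ∈ Metric.ball x₀ (2*R) := by
          apply h2r2R
          exact hzsub (Metric.mem_ball_self hδ'pos)
        have hq2R : q ∈ Metric.ball x₀ (2*R) := h2r2R hq2r
        have hlipzq := hlip.dist_le_mul z hz2R q hq2R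
        rw [Real.coe_toNNReal L hL.le, Real.dist_eq] at hlipzq
        have habs := abs_le.mp hlipzq
        have hdzq : dist z q < δ' := by rw [dist_comm]; exact hq
        have hLd : L * dist z q ≤ L * δ' := mul_le_mul_of_nonneg_left hdzq.le hL.le
        have hLδ' : L * δ' ≤ cmin * (σ * r / 8) / 2 := by
          have h5 := mul_le_mul_of_nonneg_right hκL hσr.le
          rw [hδ'def]
          linarith
        linarith [habs.1]
      · -- positive side
        have h1 := abs_le.mp (hinner_le q z)
        have h2 := hinner_split q z
        have h3 := abs_le.mp (hinner_le z y)
        have h4 := hinner_split z y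
        linarith [h1.1, h3.1, hδ'small]
  obtain ⟨w, hwsub, hwprop⟩ := key
  -- integral estimate at scale 2r
  set f : EuclideanSpace ℝ (Fin (n+1)) → ℝ := fun q =>
    |(if 0 < u q then (1:ℝ) else 0) -
      (if (inner ℝ (q - x₀) eN : ℝ) < 0 then (1:ℝ) else 0)| with hfdef
  have hballsΩ : Metric.ball x₀ (2*r) ⊆ Ω := fun q hq => hball (h2r2R hq)
  set A : Set (EuclideanSpace ℝ (Fin (n+1))) := Ω ∩ u ⁻¹' (Set.Ioi 0) with hAdef
  have hAopen : IsOpen A := hcont.isOpen_inter_preimage hΩ isOpen_Ioi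
  set B : Set (EuclideanSpace ℝ (Fin (n+1))) :=
    {q | (inner ℝ (q - x₀) eN : ℝ) < 0} with hBdef
  have hBopen : IsOpen B := by
    have hcontinner : Continuous fun q : EuclideanSpace ℝ (Fin (n+1)) =>
        (inner ℝ (q - x₀) eN : ℝ) :=
      (continuous_id.sub continuous_const).inner continuous_const
    exact isOpen_lt hcontinner continuous_const
  have hFint : IntegrableOn (fun q =>
      |A.indicator (fun _ => (1:ℝ)) q - B.indicator (fun _ => (1:ℝ)) q|)
      (Metric.ball x₀ (2*r)) := by
    have h1 : IntegrableOn (fun _ => (1:ℝ)) (Metric.ball x₀ (2*r)) volume :=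
      integrableOn_const measure_ball_lt_top.ne
    exact ((h1.indicator hAopen.measurableSet).sub (h1.indicator hBopen.measurableSet)).abs
  have hEq : Set.EqOn (fun q =>
      |A.indicator (fun _ => (1:ℝ)) q - B.indicator (fun _ => (1:ℝ)) q|) f
      (Metric.ball x₀ (2*r)) := by
    intro q hq
    have hqΩ : q ∈ Ω := hballsΩ hq
    simp only [hfdef, Set.indicator_apply, hAdef, hBdef, Set.mem_inter_iff,
      Set.mem_preimage, Set.mem_Ioi, Set.mem_setOf_eq]
    by_cases h1 : 0 < u q <;>
      by_cases h2 : (inner ℝ (q - x₀) eN : ℝ) < 0 <;> simp [h1, h2, hqΩ]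
  have hfint : IntegrableOn f (Metric.ball x₀ (2*r)) :=
    hFint.congr_fun hEq measurableSet_ball
  have hone : Set.EqOn f (fun _ => (1:ℝ)) (Metric.ball w δ') := by
    intro q hq
    obtain ⟨h1, h2⟩ := hwprop q hq
    simp only [hfdef]
    rw [if_pos h1, if_neg (not_lt.mpr h2.le)]
    norm_num
  have hlow : (volume (Metric.ball w δ')).toReal ≤ ∫ q in Metric.ball x₀ (2*r), f q := by
    have e1 : ∫ q in Metric.ball w δ', f q = (volume (Metric.ball w δ')).toReal := by
      rw [setIntegral_congr_fun measurableSet_ball hone]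
      simp
      rfl
    calc (volume (Metric.ball w δ')).toReal = ∫ q in Metric.ball w δ', f q := e1.symm
    _ ≤ ∫ q in Metric.ball x₀ (2*r), f q := by
        apply setIntegral_mono_set hfint ?_ (HasSubset.Subset.eventuallyLE hwsub)
        filter_upwards with q using abs_nonneg _
  have hvol : (volume (Metric.ball w δ')).toReal = δ' ^ (n+1) * c0 := by
    rw [Measure.addHaar_ball volume w hδ'pos.le, finrank_euclideanSpace_fin,
      ENNReal.toReal_mul, ENNReal.toReal_ofReal (by positivity)]
  -- apply the density hypothesis at s = 2r
  have h2rIoi : (2*r : ℝ) ∈ Set.Ioi (0:ℝ) := by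
    simp; linarith
  have h2rδ : dist (2*r : ℝ) 0 < δ := by
    rw [Real.dist_0_eq_abs, abs_of_pos (by linarith)]
    linarith
  have hlt := hδ h2rIoi h2rδ
  rw [Real.dist_0_eq_abs] at hlt
  have hIntnn : 0 ≤ ∫ q in Metric.ball x₀ (2*r), f q :=
    setIntegral_nonneg measurableSet_ball (fun q _ => abs_nonneg _)
  have hGnn : 0 ≤ (1 / (2*r) ^ (n+1)) * ∫ q in Metric.ball x₀ (2*r), f q := by
    apply mul_nonneg _ hIntnn
    positivity
  have hGabs : (1 / (2*r) ^ (n+1)) * ∫ q in Metric.ball x₀ (2*r), f q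
      < (κ * σ / 2) ^ (n+1) * c0 := by
    have : |(1 / (2*r) ^ (n+1)) * ∫ q in Metric.ball x₀ (2*r), f q|
        < (κ * σ / 2) ^ (n+1) * c0 := hlt
    rwa [abs_of_nonneg hGnn] at this
  have hGlow : (κ * σ / 2) ^ (n+1) * c0
      ≤ (1 / (2*r) ^ (n+1)) * ∫ q in Metric.ball x₀ (2*r), f q := by
    have hstep : (1 / (2*r) ^ (n+1)) * (δ' ^ (n+1) * c0)
        ≤ (1 / (2*r) ^ (n+1)) * ∫ q in Metric.ball x₀ (2*r), f q := by
      apply mul_le_mul_of_nonneg_left _ (by positivity)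
      rw [← hvol]
      exact hlow
    have hcalc : (1 / (2*r) ^ (n+1)) * (δ' ^ (n+1) * c0) = (κ * σ / 2) ^ (n+1) * c0 := by
      have hratio : δ' / (2*r) = κ * σ / 2 := by
        rw [hδ'def]
        field_simp
      calc (1 / (2*r) ^ (n+1)) * (δ' ^ (n+1) * c0)
          = (δ' / (2*r)) ^ (n+1) * c0 := by rw [div_pow]; ring
        _ = (κ * σ / 2) ^ (n+1) * c0 := by rw [hratio]
    linarith
  linarith
end
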